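/- Let λ > 0 and α > 0. The maximum of λ·(|z₁|² + |√λ·α·z₁ + z₂|²) over complex z₁, z₂ with |z₁|² + |z₂|² = 1 equals λ·(√λ·α/2 + √(1 + λα²/4))², which equals (2/α)²·g(r)² with r = (2/α)²/λ and g(r) = (1 + √(1+r))/r. -/

import Mathlib

lemma aux_expand (β : ℝ) (z₁ z₂ : ℂ) :
    ‖(β:ℂ) * z₁ + z₂‖ ^ 2 =
      β^2 * ‖z₁‖ ^ 2 + ‖z₂‖ ^ 2 + 2 * β * (z₁ * starRingEnd ℂ z₂).re := by
  rw [Complex.sq_norm, Complex.normSq_add, Complex.sq_norm, Complex.sq_norm, Complex.normSq_mul,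
    Complex.normSq_ofReal]
  have : ((β:ℂ) * z₁ * starRingEnd ℂ z₂).re = β * (z₁ * starRingEnd ℂ z₂).re := by
    rw [mul_assoc]; simp [Complex.mul_re]
  rw [this]; ring

lemma aux_ub (β s : ℝ) (hβ0 : 0 < β) (hs2 : s^2 = 1 + β^2/4) (hsβ : β/2 < s)
    (z₁ z₂ : ℂ) (h : ‖z₁‖^2 + ‖z₂‖^2 = 1) :
    ‖z₁‖ ^ 2 + ‖(β:ℂ)*z₁+z₂‖^2 ≤ (β/2+s)^2 := by
  rw [aux_expand]
  set a := ‖z₁‖ with ha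
  set b := ‖z₂‖ with hb
  have ha0 : 0 ≤ a := norm_nonneg _
  have hb0 : 0 ≤ b := norm_nonneg _
  have hc : (z₁ * starRingEnd ℂ z₂).re ≤ a * b := by
    calc (z₁ * starRingEnd ℂ z₂).re ≤ ‖z₁ * starRingEnd ℂ z₂‖ := Complex.re_le_norm _
    _ = a * b := by rw [norm_mul, Complex.norm_conj]
  have ht : 0 < s - β/2 := by linarith
  have h2 : 2 * β * (z₁ * starRingEnd ℂ z₂).re ≤ 2 * β * (a * b) := by
    apply mul_le_mul_of_nonneg_left hc; positivity
  nlinarith [mul_nonneg hβ0.le (sq_nonneg ((s - β/2)*a - b)), mul_pos hβ0 ht,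
    mul_nonneg (mul_nonneg hβ0.le ha0) hb0]

lemma aux_mem (β s : ℝ) (hβ0 : 0 < β) (hs2 : s^2 = 1 + β^2/4) (hsβ : β/2 < s) :
    ∃ z₁ z₂ : ℂ, ‖z₁‖ ^ 2 + ‖z₂‖ ^ 2 = 1 ∧
      ‖z₁‖ ^ 2 + ‖(β:ℂ) * z₁ + z₂‖ ^ 2 = (β/2 + s)^2 := by
  set t := s - β/2 with ht_def
  have ht : 0 < t := by simp only [ht_def]; linarith
  set n := Real.sqrt (1 + t^2) with hn_def
  have hn2 : n ^ 2 = 1 + t ^ 2 := Real.sq_sqrt (by positivity)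
  have hn0 : 0 < n := Real.sqrt_pos.mpr (by positivity)
  refine ⟨((1/n : ℝ) : ℂ), ((t/n : ℝ) : ℂ), ?_, ?_⟩
  · rw [Complex.norm_real, Complex.norm_real, Real.norm_eq_abs, Real.norm_eq_abs, sq_abs, sq_abs]
    field_simp
    linarith
  · rw [aux_expand, Complex.norm_real, Complex.norm_real, Real.norm_eq_abs, Real.norm_eq_abs, sq_abs, sq_abs]
    have hre : (((1/n : ℝ):ℂ) * starRingEnd ℂ ((t/n : ℝ):ℂ)).re = (1/n) * (t/n) := by
      rw [Complex.conj_ofReal, ← Complex.ofReal_mul, Complex.ofReal_re]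
    rw [hre]
    have hn2' : n^2 = 2 + β^2/2 - β*s := by rw [hn2, ht_def]; linear_combination hs2
    rw [ht_def]
    have hninv : n * n⁻¹ = 1 := mul_inv_cancel₀ hn0.ne'
    linear_combination ((β*s + β^2/2 - 1)/n^2) * hs2 - ((β/2+s)^2/n^2) * hn2'
      + ((β*s + β^2/4 + s^2) * (n*n⁻¹ + 1)) * hninv

theorem stmt_8 (α lam : ℝ) (hα : 0 < α) (hlam : 0 < lam) :
    let g : ℝ → ℝ := fun r => (1 + Real.sqrt (1 + r)) / r
    let r := (2 / α) ^ 2 / lam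
    IsGreatest {x : ℝ | ∃ z₁ z₂ : ℂ,
        ‖z₁‖ ^ 2 + ‖z₂‖ ^ 2 = 1 ∧
        x = lam * (‖z₁‖ ^ 2 +
          ‖(Real.sqrt lam * α : ℝ) * z₁ + z₂‖ ^ 2)}
      (lam * (Real.sqrt lam * α / 2 + Real.sqrt (1 + lam * α ^ 2 / 4)) ^ 2) ∧
    lam * (Real.sqrt lam * α / 2 + Real.sqrt (1 + lam * α ^ 2 / 4)) ^ 2
      = (2 / α) ^ 2 * (g r) ^ 2 := by
  intro g r
  have hq2 : Real.sqrt lam ^ 2 = lam := Real.sq_sqrt hlam.le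
  have hq0 : 0 < Real.sqrt lam := Real.sqrt_pos.mpr hlam
  set β := Real.sqrt lam * α with hβ_def
  set s := Real.sqrt (1 + lam * α ^ 2 / 4) with hs_def
  have hβ0 : 0 < β := mul_pos hq0 hα
  have hs2 : s ^ 2 = 1 + β ^ 2 / 4 := by
    rw [hs_def, Real.sq_sqrt (by positivity), hβ_def, mul_pow, hq2]
  have hs0 : 0 ≤ s := Real.sqrt_nonneg _
  have hsβ : β / 2 < s := by nlinarith
  constructor
  · constructor
    · obtain ⟨z₁, z₂, h1, h2⟩ := aux_mem β s hβ0 hs2 hsβ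
      exact ⟨z₁, z₂, h1, by rw [h2]⟩
    · rintro x ⟨z₁, z₂, h1, rfl⟩
      exact mul_le_mul_of_nonneg_left (aux_ub β s hβ0 hs2 hsβ z₁ z₂ h1) hlam.le
  · show lam * (β / 2 + s) ^ 2 = (2/α)^2 * ((1 + Real.sqrt (1 + r)) / r)^2
    have hr : r = (2/α)^2/lam := rfl
    rw [hr]
    set w := Real.sqrt (1 + (2/α)^2/lam) with hw_def
    have hqs : Real.sqrt lam * s = lam * α / 2 * w := by
      rw [hs_def, ← Real.sqrt_mul hlam.le]
      have h : lam * (1 + lam * α ^ 2 / 4) = (lam * α / 2) ^ 2 * (1 + (2/α)^2/lam) := by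
        field_simp; ring
      rw [h, Real.sqrt_mul (sq_nonneg _), Real.sqrt_sq (by positivity), hw_def]
    have hinner : Real.sqrt lam * (β / 2 + s) = lam * α / 2 * (1 + w) := by
      rw [hβ_def]; linear_combination (α/2) * hq2 + hqs
    calc lam * (β / 2 + s) ^ 2 = (Real.sqrt lam * (β / 2 + s)) ^ 2 := by
          rw [mul_pow, hq2]
      _ = (lam * α / 2 * (1 + w)) ^ 2 := by rw [hinner]
      _ = (2/α)^2 * ((1 + w) / ((2/α)^2/lam))^2 := by field_simp
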